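/- Let k ≥ 1, let 0 < λ₁ < λ₂ < … < λ_k be reals and c₁,…,c_k be nonzero reals, and define P(u) = Σ_{ℓ=1}^k c_ℓ · e^{−λ_ℓ u} for u ≥ 0. Assume: the sequence (c₁,…,c_k) has at most two sign changes, i.e. the number of indices ℓ ∈ {1,…,k−1} with c_ℓ · c_{ℓ+1} < 0 is at most 2; P(0) < 0; and P(u) > 0 for all sufficiently large u. Then there exists u₀ > 0 such that P(u) < 0 for all u ∈ [0, u₀), P(u) > 0 for all u > u₀, and for every nondecreasing function f : [0,∞) → ℝ and every nonnegative finite Borel measure ν on [0,∞) for which u ↦ f(u)P(u) and u ↦ P(u) are ν-integrable, one has ∫₀^∞ f(u) P(u) dν(u) ≥ f(u₀) · ∫₀^∞ P(u) dν(u). -/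

import Mathlib

open MeasureTheory

private lemma lam_lt_of_lt {k : ℕ} {lam : ℕ → ℝ}
    (hmono : ∀ ℓ : ℕ, ℓ + 1 < k → lam ℓ < lam (ℓ + 1)) :
    ∀ a b : ℕ, a < b → b < k → lam a < lam b := by
  intro a b
  induction b with
  | zero => intro h _; omega
  | succ n ih =>
    intro hab hbk
    rcases Nat.lt_succ_iff_lt_or_eq.mp hab with h | h
    · exact lt_trans (ih h (by omega)) (hmono n hbk)
    · subst h; exact hmono a hbk

private lemma sign_const {k : ℕ} {c : ℕ → ℝ} (hc : ∀ ℓ < k, c ℓ ≠ 0)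
    (h0 : ((Finset.range (k-1)).filter fun ℓ => c ℓ * c (ℓ+1) < 0) = ∅) :
    ∀ ℓ < k, 0 < c 0 * c ℓ := by
  intro ℓ
  induction ℓ with
  | zero => intro h; exact mul_self_pos.mpr (hc 0 h)
  | succ n ih =>
    intro h
    have h1 : 0 < c 0 * c n := ih (by omega)
    have hn : n ∈ Finset.range (k-1) := Finset.mem_range.mpr (by omega)
    have h2 : ¬ (c n * c (n+1) < 0) := by
      intro hlt
      have : n ∈ (Finset.range (k-1)).filter fun ℓ => c ℓ * c (ℓ+1) < 0 :=
        Finset.mem_filter.mpr ⟨hn, hlt⟩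
      simp [h0] at this
    have h3 : c n * c (n+1) ≠ 0 := mul_ne_zero (hc n (by omega)) (hc (n+1) h)
    have h4 : 0 < c n * c (n+1) := lt_of_le_of_ne (not_lt.mp h2) (Ne.symm h3)
    nlinarith [mul_pos h1 h4, sq_nonneg (c n)]

private lemma sum_sign {k : ℕ} (hk : 1 ≤ k) (lam c : ℕ → ℝ) (hc : ∀ ℓ < k, c ℓ ≠ 0)
    (h0 : ((Finset.range (k-1)).filter fun ℓ => c ℓ * c (ℓ+1) < 0) = ∅) (u : ℝ) :
    0 < c 0 * ∑ ℓ ∈ Finset.range k, c ℓ * Real.exp (-(lam ℓ * u)) := by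
  rw [Finset.mul_sum]
  apply Finset.sum_pos
  · intro ℓ hℓ
    have h1 := sign_const hc h0 ℓ (Finset.mem_range.mp hℓ)
    have he := Real.exp_pos (-(lam ℓ * u))
    nlinarith [mul_pos h1 he]
  · exact Finset.nonempty_range_iff.mpr (by omega)

private lemma reduce (k : ℕ) (lam c : ℕ → ℝ)
    (hmono : ∀ ℓ : ℕ, ℓ + 1 < k → lam ℓ < lam (ℓ + 1))
    (hc : ∀ ℓ < k, c ℓ ≠ 0) (j : ℕ)
    (hj : j ∈ (Finset.range (k-1)).filter fun ℓ => c ℓ * c (ℓ+1) < 0) :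
    ∃ (lam' c' : ℕ → ℝ) (μ : ℝ),
      (∀ ℓ : ℕ, ℓ + 1 < k → lam' ℓ < lam' (ℓ + 1)) ∧
      (∀ ℓ < k, c' ℓ ≠ 0) ∧
      ((Finset.range (k-1)).filter fun ℓ => c' ℓ * c' (ℓ+1) < 0)
        = ((Finset.range (k-1)).filter fun ℓ => c ℓ * c (ℓ+1) < 0).erase j ∧
      ∀ u : ℝ, HasDerivAt
        (fun v => Real.exp (μ*v) * ∑ ℓ ∈ Finset.range k, c ℓ * Real.exp (-(lam ℓ * v)))
        (∑ ℓ ∈ Finset.range k, c' ℓ * Real.exp (-(lam' ℓ * u))) u := by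
  obtain ⟨hjr, hjneg⟩ := Finset.mem_filter.mp hj
  have hjk : j < k - 1 := Finset.mem_range.mp hjr
  have hj1k : j + 1 < k := by omega
  set μ : ℝ := (lam j + lam (j+1)) / 2 with hμ
  have hμ1 : lam j < μ := by have := hmono j hj1k; simp [hμ]; linarith
  have hμ2 : μ < lam (j+1) := by have := hmono j hj1k; simp [hμ]; linarith
  have hside : ∀ ℓ < k, (ℓ ≤ j → lam ℓ < μ) ∧ (j + 1 ≤ ℓ → μ < lam ℓ) := by
    intro ℓ hℓ
    constructor
    · intro hle
      rcases eq_or_lt_of_le hle with h | h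
      · subst h; exact hμ1
      · exact lt_trans (lam_lt_of_lt hmono ℓ j h (by omega)) hμ1
    · intro hge
      rcases eq_or_lt_of_le hge with h | h
      · rw [← h]; exact hμ2
      · exact lt_trans hμ2 (lam_lt_of_lt hmono (j+1) ℓ h hℓ)
  refine ⟨fun ℓ => lam ℓ - μ, fun ℓ => c ℓ * (μ - lam ℓ), μ, ?_, ?_, ?_, ?_⟩
  · intro ℓ hℓ; have := hmono ℓ hℓ; show lam ℓ - μ < lam (ℓ+1) - μ; linarith
  · intro ℓ hℓ
    refine mul_ne_zero (hc ℓ hℓ) ?_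
    rcases le_or_gt ℓ j with h | h
    · exact ne_of_gt (by linarith [(hside ℓ hℓ).1 h])
    · exact ne_of_lt (by linarith [(hside ℓ hℓ).2 h])
  · ext ℓ
    simp only [Finset.mem_filter, Finset.mem_erase]
    constructor
    · rintro ⟨hr, hneg⟩
      have hℓk : ℓ < k - 1 := Finset.mem_range.mp hr
      have hℓ1k : ℓ + 1 < k := by omega
      rcases eq_or_ne ℓ j with h | h
      · exfalso
        subst h
        have w1 : 0 < μ - lam ℓ := by linarith [(hside ℓ (by omega)).1 le_rfl]
        have w2 : μ - lam (ℓ+1) < 0 := by linarith [(hside (ℓ+1) hℓ1k).2 le_rfl]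
        nlinarith [mul_pos_of_neg_of_neg hjneg (mul_neg_of_pos_of_neg w1 w2)]
      · refine ⟨h, hr, ?_⟩
        have hw : 0 < (μ - lam ℓ) * (μ - lam (ℓ+1)) := by
          rcases lt_or_gt_of_ne h with hlt | hgt
          · have w1 : 0 < μ - lam ℓ := by linarith [(hside ℓ (by omega)).1 (by omega)]
            have w2 : 0 < μ - lam (ℓ+1) := by linarith [(hside (ℓ+1) hℓ1k).1 (by omega)]
            positivity
          · have w1 : μ - lam ℓ < 0 := by linarith [(hside ℓ (by omega)).2 (by omega)]
            have w2 : μ - lam (ℓ+1) < 0 := by linarith [(hside (ℓ+1) hℓ1k).2 (by omega)]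
            nlinarith [mul_pos_of_neg_of_neg w1 w2]
        nlinarith [hw, hneg, mul_pos hw hw]
    · rintro ⟨h, hr, hneg⟩
      have hℓk : ℓ < k - 1 := Finset.mem_range.mp hr
      have hℓ1k : ℓ + 1 < k := by omega
      refine ⟨hr, ?_⟩
      have hw : 0 < (μ - lam ℓ) * (μ - lam (ℓ+1)) := by
        rcases lt_or_gt_of_ne h with hlt | hgt
        · have w1 : 0 < μ - lam ℓ := by linarith [(hside ℓ (by omega)).1 (by omega)]
          have w2 : 0 < μ - lam (ℓ+1) := by linarith [(hside (ℓ+1) hℓ1k).1 (by omega)]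
          positivity
        · have w1 : μ - lam ℓ < 0 := by linarith [(hside ℓ (by omega)).2 (by omega)]
          have w2 : μ - lam (ℓ+1) < 0 := by linarith [(hside (ℓ+1) hℓ1k).2 (by omega)]
          nlinarith
      nlinarith
  · intro u
    have hfun : (fun v => Real.exp (μ*v) * ∑ ℓ ∈ Finset.range k, c ℓ * Real.exp (-(lam ℓ * v)))
        = fun v => ∑ ℓ ∈ Finset.range k, c ℓ * Real.exp ((μ - lam ℓ) * v) := by
      funext v
      rw [Finset.mul_sum]
      refine Finset.sum_congr rfl fun ℓ _ => ?_
      have : Real.exp (μ*v) * Real.exp (-(lam ℓ * v)) = Real.exp ((μ - lam ℓ) * v) := by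
        rw [← Real.exp_add]; congr 1; ring
      rw [← this]; ring
    rw [hfun]
    refine HasDerivAt.fun_sum fun ℓ _ => ?_
    have h1 : HasDerivAt (fun v : ℝ => (μ - lam ℓ) * v) ((μ - lam ℓ) * 1) u :=
      (hasDerivAt_id u).const_mul (μ - lam ℓ)
    have h2 := (h1.exp).const_mul (c ℓ)
    refine h2.congr_deriv ?_
    beta_reduce
    rw [show -((lam ℓ - μ) * u) = (μ - lam ℓ) * u by ring]
    ring

private lemma L1 (k : ℕ) (hk : 1 ≤ k) (lam c : ℕ → ℝ)
    (hmono : ∀ ℓ : ℕ, ℓ + 1 < k → lam ℓ < lam (ℓ + 1))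
    (hc : ∀ ℓ < k, c ℓ ≠ 0)
    (hsign : ((Finset.range (k-1)).filter fun ℓ => c ℓ * c (ℓ+1) < 0).card ≤ 1)
    (t1 t2 t3 : ℝ) (h12 : t1 < t2) (h23 : t2 < t3)
    (v1 : 0 ≤ ∑ ℓ ∈ Finset.range k, c ℓ * Real.exp (-(lam ℓ * t1)))
    (v2 : (∑ ℓ ∈ Finset.range k, c ℓ * Real.exp (-(lam ℓ * t2))) ≤ 0)
    (v3 : 0 ≤ ∑ ℓ ∈ Finset.range k, c ℓ * Real.exp (-(lam ℓ * t3))) : False := by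
  set T := (Finset.range (k-1)).filter fun ℓ => c ℓ * c (ℓ+1) < 0 with hT
  rcases Finset.eq_empty_or_nonempty T with hemp | ⟨j, hjT⟩
  · have a1 := sum_sign hk lam c hc hemp t1
    have a2 := sum_sign hk lam c hc hemp t2
    nlinarith [mul_pos a1 a2, mul_nonneg v1 (neg_nonneg.mpr v2), sq_nonneg (c 0)]
  · obtain ⟨lam', c', μ, hmono', hc', hfilt, hderiv⟩ := reduce k lam c hmono hc j hjT
    have hcard' : ((Finset.range (k-1)).filter fun ℓ => c' ℓ * c' (ℓ+1) < 0) = ∅ := by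
      rw [hfilt]
      apply Finset.card_eq_zero.mp
      rw [Finset.card_erase_of_mem hjT]
      omega
    set Q := fun v => Real.exp (μ*v) * ∑ ℓ ∈ Finset.range k, c ℓ * Real.exp (-(lam ℓ * v)) with hQ
    set D := fun u => ∑ ℓ ∈ Finset.range k, c' ℓ * Real.exp (-(lam' ℓ * u)) with hD
    have hQcont : Continuous Q := by
      have : Differentiable ℝ Q := fun u => (hderiv u).differentiableAt
      exact this.continuous
    obtain ⟨ξ1, hξ1, hs1⟩ := exists_hasDerivAt_eq_slope Q D h12
      hQcont.continuousOn (fun x _ => hderiv x)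
    obtain ⟨ξ2, hξ2, hs2⟩ := exists_hasDerivAt_eq_slope Q D h23
      hQcont.continuousOn (fun x _ => hderiv x)
    have e1 := Real.exp_pos (μ*t1)
    have e2 := Real.exp_pos (μ*t2)
    have e3 := Real.exp_pos (μ*t3)
    have hq1 : 0 ≤ Q t1 := mul_nonneg e1.le v1
    have hq2 : Q t2 ≤ 0 := by simp only [hQ]; nlinarith
    have hq3 : 0 ≤ Q t3 := mul_nonneg e3.le v3
    have hd1 : D ξ1 ≤ 0 := by rw [hs1]; apply div_nonpos_of_nonpos_of_nonneg <;> linarith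
    have hd2 : 0 ≤ D ξ2 := by rw [hs2]; apply div_nonneg <;> linarith
    have b1 := sum_sign hk lam' c' hc' hcard' ξ1
    have b2 := sum_sign hk lam' c' hc' hcard' ξ2
    have hb1 : 0 < c' 0 * D ξ1 := b1
    have hb2 : 0 < c' 0 * D ξ2 := b2
    nlinarith [mul_pos hb1 hb2, mul_nonneg (neg_nonneg.mpr hd1) hd2, sq_nonneg (c' 0)]

private lemma L2 (k : ℕ) (hk : 1 ≤ k) (lam c : ℕ → ℝ)
    (hmono : ∀ ℓ : ℕ, ℓ + 1 < k → lam ℓ < lam (ℓ + 1))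
    (hc : ∀ ℓ < k, c ℓ ≠ 0)
    (hsign : ((Finset.range (k-1)).filter fun ℓ => c ℓ * c (ℓ+1) < 0).card ≤ 2)
    (t1 t2 t3 t4 : ℝ) (h12 : t1 < t2) (h23 : t2 < t3) (h34 : t3 < t4)
    (v1 : (∑ ℓ ∈ Finset.range k, c ℓ * Real.exp (-(lam ℓ * t1))) < 0)
    (v2 : 0 ≤ ∑ ℓ ∈ Finset.range k, c ℓ * Real.exp (-(lam ℓ * t2)))
    (v3 : (∑ ℓ ∈ Finset.range k, c ℓ * Real.exp (-(lam ℓ * t3))) ≤ 0)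
    (v4 : 0 < ∑ ℓ ∈ Finset.range k, c ℓ * Real.exp (-(lam ℓ * t4))) : False := by
  set T := (Finset.range (k-1)).filter fun ℓ => c ℓ * c (ℓ+1) < 0 with hT
  rcases Finset.eq_empty_or_nonempty T with hemp | ⟨j, hjT⟩
  · have a1 := sum_sign hk lam c hc hemp t1
    have a4 := sum_sign hk lam c hc hemp t4
    nlinarith [mul_pos a1 a4, mul_pos (neg_pos.mpr v1) v4, sq_nonneg (c 0)]
  · obtain ⟨lam', c', μ, hmono', hc', hfilt, hderiv⟩ := reduce k lam c hmono hc j hjT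
    have hcard' : ((Finset.range (k-1)).filter fun ℓ => c' ℓ * c' (ℓ+1) < 0).card ≤ 1 := by
      rw [hfilt, Finset.card_erase_of_mem hjT]
      omega
    set Q := fun v => Real.exp (μ*v) * ∑ ℓ ∈ Finset.range k, c ℓ * Real.exp (-(lam ℓ * v)) with hQ
    set D := fun u => ∑ ℓ ∈ Finset.range k, c' ℓ * Real.exp (-(lam' ℓ * u)) with hD
    have hQcont : Continuous Q := by
      have : Differentiable ℝ Q := fun u => (hderiv u).differentiableAt
      exact this.continuous
    obtain ⟨ξ1, hξ1, hs1⟩ := exists_hasDerivAt_eq_slope Q D h12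
      hQcont.continuousOn (fun x _ => hderiv x)
    obtain ⟨ξ2, hξ2, hs2⟩ := exists_hasDerivAt_eq_slope Q D h23
      hQcont.continuousOn (fun x _ => hderiv x)
    obtain ⟨ξ3, hξ3, hs3⟩ := exists_hasDerivAt_eq_slope Q D h34
      hQcont.continuousOn (fun x _ => hderiv x)
    have e1 := Real.exp_pos (μ*t1)
    have e2 := Real.exp_pos (μ*t2)
    have e3 := Real.exp_pos (μ*t3)
    have e4 := Real.exp_pos (μ*t4)
    have hq1 : Q t1 ≤ 0 := by simp only [hQ]; nlinarith
    have hq2 : 0 ≤ Q t2 := mul_nonneg e2.le v2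
    have hq3 : Q t3 ≤ 0 := by simp only [hQ]; nlinarith
    have hq4 : 0 ≤ Q t4 := mul_nonneg e4.le v4.le
    have hd1 : 0 ≤ D ξ1 := by rw [hs1]; apply div_nonneg <;> linarith
    have hd2 : D ξ2 ≤ 0 := by rw [hs2]; apply div_nonpos_of_nonpos_of_nonneg <;> linarith
    have hd3 : 0 ≤ D ξ3 := by rw [hs3]; apply div_nonneg <;> linarith
    exact L1 k hk lam' c' hmono' hc' hcard' ξ1 ξ2 ξ3
      (lt_trans hξ1.2 hξ2.1) (lt_trans hξ2.2 hξ3.1) hd1 hd2 hd3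

theorem exp_polynomial_one_sign_change
    (k : ℕ) (hk : 1 ≤ k) (lam : ℕ → ℝ) (c : ℕ → ℝ)
    (hpos : ∀ ℓ < k, 0 < lam ℓ)
    (hmono : ∀ ℓ : ℕ, ℓ + 1 < k → lam ℓ < lam (ℓ + 1))
    (hc : ∀ ℓ < k, c ℓ ≠ 0)
    (hsign : ((Finset.range (k - 1)).filter fun ℓ => c ℓ * c (ℓ + 1) < 0).card ≤ 2)
    (P : ℝ → ℝ)
    (hP : ∀ u : ℝ, P u = ∑ ℓ ∈ Finset.range k, c ℓ * Real.exp (-(lam ℓ * u)))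
    (hP0 : P 0 < 0) (hPtop : ∃ M : ℝ, ∀ u ≥ M, 0 < P u) :
    ∃ u₀ : ℝ, 0 < u₀ ∧
      (∀ u : ℝ, 0 ≤ u → u < u₀ → P u < 0) ∧
      (∀ u : ℝ, u₀ < u → 0 < P u) ∧
      ∀ f : ℝ → ℝ, MonotoneOn f (Set.Ici 0) →
        ∀ ν : Measure ℝ, IsFiniteMeasure ν → ν (Set.Iio 0) = 0 →
          Integrable (fun u => f u * P u) ν → Integrable P ν →
          f u₀ * ∫ u, P u ∂ν ≤ ∫ u, f u * P u ∂ν := by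
  obtain ⟨M, hM⟩ := hPtop
  have hPfun : P = fun u => ∑ ℓ ∈ Finset.range k, c ℓ * Real.exp (-(lam ℓ * u)) := funext hP
  have hPcont : Continuous P := by
    rw [hPfun]
    apply continuous_finset_sum
    intro ℓ _
    exact continuous_const.mul (Real.continuous_exp.comp (continuous_const.mul continuous_id).neg)
  set S : Set ℝ := {u : ℝ | 0 ≤ u ∧ 0 ≤ P u} with hS
  have hSclosed : IsClosed S := by
    have : S = {u : ℝ | 0 ≤ u} ∩ {u : ℝ | 0 ≤ P u} := by ext u; simp [hS, Set.mem_setOf_eq]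
    rw [this]
    exact (isClosed_le continuous_const continuous_id).inter (isClosed_le continuous_const hPcont)
  have hSne : S.Nonempty := ⟨max M 0, le_max_right _ _, (hM _ (le_max_left _ _)).le⟩
  have hSbdd : BddBelow S := ⟨0, fun x hx => hx.1⟩
  set u₀ := sInf S with hu₀
  have hmem : u₀ ∈ S := hSclosed.csInf_mem hSne hSbdd
  have hu₀nn : 0 ≤ u₀ := hmem.1
  have hPu₀ : 0 ≤ P u₀ := hmem.2
  have hu₀pos : 0 < u₀ := by
    rcases eq_or_lt_of_le hu₀nn with h | h
    · exfalso; rw [← h] at hPu₀; linarith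
    · exact h
  have hneg : ∀ u : ℝ, 0 ≤ u → u < u₀ → P u < 0 := by
    intro u hu0 huu
    by_contra h
    exact absurd (csInf_le hSbdd ⟨hu0, not_lt.mp h⟩) (not_le.mpr huu)
  have hpos' : ∀ u : ℝ, u₀ < u → 0 < P u := by
    intro b hb
    by_contra h
    push_neg at h
    set M' := max M (b+1) with hM'
    have hM'b : b < M' := lt_of_lt_of_le (by linarith) (le_max_right _ _)
    have hPM' : 0 < P M' := hM _ (le_max_left _ _)
    refine L2 k hk lam c hmono hc hsign 0 u₀ b M' hu₀pos hb hM'b ?_ ?_ ?_ ?_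
    · rw [← hP]; exact hP0
    · rw [← hP]; exact hPu₀
    · rw [← hP]; exact h
    · rw [← hP]; exact hPM'
  refine ⟨u₀, hu₀pos, hneg, hpos', ?_⟩
  intro f hf ν hfin hν hint1 hint2
  have hint3 : Integrable (fun u => f u₀ * P u) ν := hint2.const_mul _
  have hae : ∀ᵐ u ∂ν, 0 ≤ u := by
    rw [ae_iff]
    have : {u : ℝ | ¬ 0 ≤ u} = Set.Iio 0 := by ext u; simp [Set.mem_Iio]
    rw [this]; exact hν
  have key : ∀ᵐ u ∂ν, 0 ≤ f u * P u - f u₀ * P u := by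
    refine hae.mono fun u hu => ?_
    rcases lt_trichotomy u u₀ with h | h | h
    · have h1 : P u < 0 := hneg u hu h
      have h2 : f u ≤ f u₀ := hf hu (Set.mem_Ici.mpr hu₀nn) h.le
      nlinarith
    · subst h; simp
    · have h1 : 0 < P u := hpos' u h
      have h2 : f u₀ ≤ f u := hf (Set.mem_Ici.mpr hu₀nn) hu h.le
      nlinarith
  have h0 : 0 ≤ ∫ u, (f u * P u - f u₀ * P u) ∂ν := integral_nonneg_of_ae key
  rw [integral_sub hint1 hint3, integral_const_mul] at h0
  linarith
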